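/- arXiv:1402.5178 — 3 statements merged into one kernel-verified Lean document; each statement's English description precedes it below -/
import Mathlib

section
/- Real case (β = 1) of the congruence-transformation Jacobian. Let A be an invertible m×m real matrix and C an m×m real symmetric matrix, and let φ be the map on m×m real symmetric matrices given by φ(S) = A·S·Aᵀ + C. Then for every measurable set E of m×m real symmetric matrices, the Lebesgue measure of φ(E) equals |det A|^{m+1} times the Lebesgue measure of E. Equivalently, the linear endomorphism S ↦ A S Aᵀ of the space of m×m real symmetric matrices has determinant of absolute value |det A|^{m+1}. -/
open Matrix MeasureTheory ProbabilityTheory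
open scoped ENNReal NNReal Classical

noncomputable section

instance matrixMeasureSpace (n m : ℕ) : MeasureSpace (Matrix (Fin n) (Fin m) ℝ) :=
  inferInstanceAs (MeasureSpace (Fin n → Fin m → ℝ))

/-- Determinant of the `(i+1) × (i+1)` leading principal submatrix of `A`. -/
def lpdet {m : ℕ} (A : Matrix (Fin m) (Fin m) ℝ) (i : Fin m) : ℝ :=
  (A.submatrix (Fin.castLE i.isLt) (Fin.castLE i.isLt)).det

/-- The highest weight vector `q_κ(A) = det(A)^{k_m} ∏_{i<m} det(A_i)^{k_i - k_{i+1}}`. -/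
def qWeight {m : ℕ} (κ : Fin m → ℝ) (A : Matrix (Fin m) (Fin m) ℝ) : ℝ :=
  ∏ i : Fin m, lpdet A i ^ (κ i - if h : (i : ℕ) + 1 < m then κ ⟨(i : ℕ) + 1, h⟩ else 0)

/-- The generalised gamma function of weight `κ`:
`Γ_m[a, κ] = π^{m(m-1)/4} ∏_{i=1}^m Γ(a + k_i - (i-1)/2)`. -/
def gammaGen (m : ℕ) (a : ℝ) (κ : Fin m → ℝ) : ℝ :=
  Real.pi ^ ((m : ℝ) * ((m : ℝ) - 1) / 4) *
    ∏ i : Fin m, Real.Gamma (a + κ i - ((i : ℕ) : ℝ) / 2)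

/-- The generalised gamma function of weight `-κ`:
`Γ_m[a, -κ] = π^{m(m-1)/4} ∏_{i=1}^m Γ(a - k_i - (m-i)/2)`. -/
def gammaGenNeg (m : ℕ) (a : ℝ) (κ : Fin m → ℝ) : ℝ :=
  Real.pi ^ ((m : ℝ) * ((m : ℝ) - 1) / 4) *
    ∏ i : Fin m, Real.Gamma (a - κ i - ((m : ℝ) - 1 - ((i : ℕ) : ℝ)) / 2)

/-- The generalised c-beta function `B_m[a,κ; b,τ]`. -/
def betaC (m : ℕ) (a : ℝ) (κ : Fin m → ℝ) (b : ℝ) (τ : Fin m → ℝ) : ℝ :=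
  gammaGen m a κ * gammaGen m b τ / gammaGen m (a + b) (κ + τ)

/-- The generalised k-beta function `B_m[a,-κ; b,-τ]`. -/
def betaK (m : ℕ) (a : ℝ) (κ : Fin m → ℝ) (b : ℝ) (τ : Fin m → ℝ) : ℝ :=
  gammaGenNeg m a κ * gammaGenNeg m b τ / gammaGenNeg m (a + b) (κ + τ)

/-- The Cholesky factor `u(A)` of a positive definite matrix `A`: the unique upper
triangular matrix with positive diagonal entries such that `A = u(A)ᵀ * u(A)`
(junk value `1` if `A` is not positive definite). -/
def cholU {m : ℕ} (A : Matrix (Fin m) (Fin m) ℝ) : Matrix (Fin m) (Fin m) ℝ :=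
  haveI : WellFoundedLT (Fin m) := inferInstance
  if h : A.PosDef then
    Matrix.diagonal (fun i => Real.sqrt (LDL.diagEntries h i)) * (LDL.lower h)ᵀ
  else 1

/-- Assembling a symmetric matrix from its upper-triangular entries. -/
def symOfUpper {m : ℕ} (x : {p : Fin m × Fin m // p.1 ≤ p.2} → ℝ) :
    Matrix (Fin m) (Fin m) ℝ :=
  Matrix.of fun i j => if h : i ≤ j then x ⟨(i, j), h⟩ else x ⟨(j, i), le_of_not_ge h⟩

/-- Lebesgue measure on the space of `m × m` real symmetric matrices: the pushforward
of Lebesgue measure on `ℝ^{m(m+1)/2}` under the map assembling a symmetric matrix from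
its upper-triangular entries. -/
def symMeasure (m : ℕ) : Measure (Matrix (Fin m) (Fin m) ℝ) :=
  Measure.map symOfUpper volume

/-- The matricvariate Pearson type II-Riesz type I density with parameters `(ν, κ, τ)`. -/
def pearson1Density (n m : ℕ) (ν : ℝ) (κ τ : Fin m → ℝ)
    (R : Matrix (Fin n) (Fin m) ℝ) : ℝ :=
  if (Rᵀ * R).PosDef ∧ (1 - Rᵀ * R).PosDef then
    gammaGen m ((n : ℝ) / 2) 0 /
        (Real.pi ^ ((m : ℝ) * (n : ℝ) / 2) * betaC m (ν / 2) κ ((n : ℝ) / 2) τ) *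
      (1 - Rᵀ * R).det ^ ((ν - (m : ℝ) - 1) / 2) *
      qWeight κ (1 - Rᵀ * R) * qWeight τ (Rᵀ * R)
  else 0

/-- The matricvariate Pearson type II-Riesz type II density with parameters `(ν, κ, τ)`. -/
def pearson2Density (n m : ℕ) (ν : ℝ) (κ τ : Fin m → ℝ)
    (R : Matrix (Fin n) (Fin m) ℝ) : ℝ :=
  if (Rᵀ * R).PosDef ∧ (1 - Rᵀ * R).PosDef then
    gammaGen m ((n : ℝ) / 2) 0 /
        (Real.pi ^ ((m : ℝ) * (n : ℝ) / 2) * betaK m (ν / 2) κ ((n : ℝ) / 2) τ) *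
      (1 - Rᵀ * R).det ^ ((ν - (m : ℝ) - 1) / 2) *
      qWeight κ ((1 - Rᵀ * R)⁻¹) * qWeight τ ((Rᵀ * R)⁻¹)
  else 0

/-- The matricvariate T-Riesz type I density with parameters `(ν, κ, τ)`. -/
def tRiesz1Density (n m : ℕ) (ν : ℝ) (κ τ : Fin m → ℝ)
    (T : Matrix (Fin n) (Fin m) ℝ) : ℝ :=
  if (Tᵀ * T).PosDef then
    gammaGen m ((n : ℝ) / 2) 0 /
        (Real.pi ^ ((m : ℝ) * (n : ℝ) / 2) * betaC m (ν / 2) κ ((n : ℝ) / 2) τ) *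
      (1 + Tᵀ * T).det ^ (-(ν + (n : ℝ)) / 2) *
      qWeight (-κ - τ) (1 + Tᵀ * T) * qWeight τ (Tᵀ * T)
  else 0

/-- The matricvariate T-Riesz type II density with parameters `(ν, κ, τ)`. -/
def tRiesz2Density (n m : ℕ) (ν : ℝ) (κ τ : Fin m → ℝ)
    (T : Matrix (Fin n) (Fin m) ℝ) : ℝ :=
  if (Tᵀ * T).PosDef then
    gammaGen m ((n : ℝ) / 2) 0 /
        (Real.pi ^ ((m : ℝ) * (n : ℝ) / 2) * betaK m (ν / 2) κ ((n : ℝ) / 2) τ) *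
      (1 + Tᵀ * T).det ^ (-(ν + (n : ℝ)) / 2) *
      qWeight (-κ - τ) ((1 + Tᵀ * T)⁻¹) * qWeight τ ((Tᵀ * T)⁻¹)
  else 0

/-- The Riesz type I density with parameters `(a, κ)` and identity scale. -/
def riesz1Density (m : ℕ) (a : ℝ) (κ : Fin m → ℝ) (V : Matrix (Fin m) (Fin m) ℝ) : ℝ :=
  if V.PosDef then
    (1 / gammaGen m a κ) * Real.exp (-V.trace) * V.det ^ (a - ((m : ℝ) + 1) / 2) * qWeight κ V
  else 0

/-- The Riesz type II density with parameters `(a, κ)` and identity scale. -/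
def riesz2Density (m : ℕ) (a : ℝ) (κ : Fin m → ℝ) (V : Matrix (Fin m) (Fin m) ℝ) : ℝ :=
  if V.PosDef then
    (1 / gammaGenNeg m a κ) * Real.exp (-V.trace) * V.det ^ (a - ((m : ℝ) + 1) / 2) *
      qWeight κ (V⁻¹)
  else 0

/-- The Kotz-Riesz type I density with weight `τ` (zero location, identity scales). -/
def kotz1Density (n m : ℕ) (τ : Fin m → ℝ) (X : Matrix (Fin n) (Fin m) ℝ) : ℝ :=
  if (Xᵀ * X).PosDef then
    gammaGen m ((n : ℝ) / 2) 0 /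
        (Real.pi ^ ((m : ℝ) * (n : ℝ) / 2) * gammaGen m ((n : ℝ) / 2) τ) *
      Real.exp (-(Xᵀ * X).trace) * qWeight τ (Xᵀ * X)
  else 0

/-- The Kotz-Riesz type II density with weight `τ` (zero location, identity scales). -/
def kotz2Density (n m : ℕ) (τ : Fin m → ℝ) (X : Matrix (Fin n) (Fin m) ℝ) : ℝ :=
  if (Xᵀ * X).PosDef then
    gammaGen m ((n : ℝ) / 2) 0 /
        (Real.pi ^ ((m : ℝ) * (n : ℝ) / 2) * gammaGenNeg m ((n : ℝ) / 2) τ) *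
      Real.exp (-(Xᵀ * X).trace) * qWeight τ ((Xᵀ * X)⁻¹)
  else 0

/-- The matricvariate c-beta-Riesz type II density with parameters `(ν, n, κ, τ)`. -/
def cBetaIIDensity (m n : ℕ) (ν : ℝ) (κ τ : Fin m → ℝ) (F : Matrix (Fin m) (Fin m) ℝ) : ℝ :=
  if F.PosDef then
    (1 / betaC m (ν / 2) κ ((n : ℝ) / 2) τ) * F.det ^ (((n : ℝ) - (m : ℝ) - 1) / 2) *
      (1 + F).det ^ (-((n : ℝ) + ν) / 2) * qWeight (-κ - τ) (1 + F) * qWeight τ F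
  else 0

/-- The matricvariate k-beta-Riesz type II density with parameters `(ν, n, κ, τ)`. -/
def kBetaIIDensity (m n : ℕ) (ν : ℝ) (κ τ : Fin m → ℝ) (F : Matrix (Fin m) (Fin m) ℝ) : ℝ :=
  if F.PosDef then
    (1 / betaK m (ν / 2) κ ((n : ℝ) / 2) τ) * F.det ^ (((n : ℝ) - (m : ℝ) - 1) / 2) *
      (1 + F).det ^ (-((n : ℝ) + ν) / 2) * qWeight (-κ - τ) ((1 + F)⁻¹) * qWeight τ (F⁻¹)
  else 0

/-- The subspace of `m × m` real symmetric matrices. -/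
def symSubmodule (m : ℕ) : Submodule ℝ (Matrix (Fin m) (Fin m) ℝ) where
  carrier := {S | Sᵀ = S}
  add_mem' := fun {a} {b} ha hb => by
    simp only [Set.mem_setOf_eq] at *
    rw [Matrix.transpose_add, ha, hb]
  zero_mem' := by simp
  smul_mem' := fun c a ha => by
    simp only [Set.mem_setOf_eq] at *
    rw [Matrix.transpose_smul, ha]

/-- The congruence map `S ↦ A * S * Aᵀ` as a linear endomorphism of the space of
`m × m` real symmetric matrices. -/
def congrSymMap {m : ℕ} (A : Matrix (Fin m) (Fin m) ℝ) :
    symSubmodule m →ₗ[ℝ] symSubmodule m where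
  toFun S := ⟨A * S.1 * Aᵀ, by
    have hS : (S.1)ᵀ = S.1 := S.2
    show (A * S.1 * Aᵀ)ᵀ = A * S.1 * Aᵀ
    rw [Matrix.transpose_mul, Matrix.transpose_mul, Matrix.transpose_transpose, hS,
      Matrix.mul_assoc]⟩
  map_add' S T := by
    apply Subtype.ext
    show A * (S.1 + T.1) * Aᵀ = A * S.1 * Aᵀ + A * T.1 * Aᵀ
    rw [Matrix.mul_add, Matrix.add_mul]
  map_smul' c S := by
    apply Subtype.ext
    show A * (c • S.1) * Aᵀ = c • (A * S.1 * Aᵀ)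
    rw [Matrix.mul_smul, Matrix.smul_mul]

/-- The linear map `H ↦ -(S⁻¹ * H * S⁻¹)` on the space of `m × m` real symmetric
matrices (the Fréchet derivative of matrix inversion at `S`). -/
def invDerivSym {m : ℕ} (S : Matrix (Fin m) (Fin m) ℝ) (hS : Sᵀ = S) :
    symSubmodule m →ₗ[ℝ] symSubmodule m where
  toFun H := ⟨-(S⁻¹ * H.1 * S⁻¹), by
    have hH : (H.1)ᵀ = H.1 := H.2
    have hinv : (S⁻¹)ᵀ = S⁻¹ := by rw [Matrix.transpose_nonsing_inv, hS]
    show (-(S⁻¹ * H.1 * S⁻¹))ᵀ = -(S⁻¹ * H.1 * S⁻¹)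
    rw [Matrix.transpose_neg, Matrix.transpose_mul, Matrix.transpose_mul, hinv, hH,
      Matrix.mul_assoc]⟩
  map_add' H K := by
    apply Subtype.ext
    show -(S⁻¹ * (H.1 + K.1) * S⁻¹) = -(S⁻¹ * H.1 * S⁻¹) + -(S⁻¹ * K.1 * S⁻¹)
    rw [Matrix.mul_add, Matrix.add_mul, neg_add]
  map_smul' c H := by
    apply Subtype.ext
    show -(S⁻¹ * (c • H.1) * S⁻¹) = c • -(S⁻¹ * H.1 * S⁻¹)
    rw [Matrix.mul_smul, Matrix.smul_mul, smul_neg]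

namespace JacobianAux

variable {m : ℕ}

/-- Index type for upper-triangular entries. -/
abbrev SymIdx (m : ℕ) := {p : Fin m × Fin m // p.1 ≤ p.2}

/-- Upper-triangular coordinates of a matrix. -/
def coordsOf (S : Matrix (Fin m) (Fin m) ℝ) : SymIdx m → ℝ := fun p => S p.1.1 p.1.2

lemma coordsOf_symOfUpper (x : SymIdx m → ℝ) : coordsOf (symOfUpper x) = x := by
  funext p
  simp only [coordsOf, symOfUpper, Matrix.of_apply, dif_pos p.2]

lemma coordsOf_add (S T : Matrix (Fin m) (Fin m) ℝ) :
    coordsOf (S + T) = coordsOf S + coordsOf T := rfl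

lemma symOfUpper_coordsOf {S : Matrix (Fin m) (Fin m) ℝ} (hS : Sᵀ = S) :
    symOfUpper (coordsOf S) = S := by
  ext i j
  simp only [symOfUpper, coordsOf, Matrix.of_apply]
  split_ifs with h
  · rfl
  · conv_rhs => rw [← hS]
    rfl

lemma symOfUpper_transpose (x : SymIdx m → ℝ) : (symOfUpper x)ᵀ = symOfUpper x := by
  ext i j
  simp only [Matrix.transpose_apply, symOfUpper, Matrix.of_apply]
  rcases le_total i j with h | h
  · rcases eq_or_lt_of_le h with rfl | hlt
    · simp
    · rw [dif_neg (not_le.2 hlt), dif_pos h]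
  · rcases eq_or_lt_of_le h with rfl | hlt
    · simp
    · rw [dif_pos h, dif_neg (not_le.2 hlt)]

/-- Linear equivalence between upper-triangular coordinates and symmetric matrices. -/
def eqL (m : ℕ) : (SymIdx m → ℝ) ≃ₗ[ℝ] symSubmodule m where
  toFun x := ⟨symOfUpper x, symOfUpper_transpose x⟩
  map_add' x y := by
    apply Subtype.ext
    show symOfUpper (x + y) = symOfUpper x + symOfUpper y
    ext i j
    simp only [symOfUpper, Matrix.of_apply, Matrix.add_apply, Pi.add_apply]
    split_ifs <;> rfl
  map_smul' c x := by
    apply Subtype.ext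
    show symOfUpper (c • x) = c • symOfUpper x
    ext i j
    simp only [symOfUpper, Matrix.of_apply, Matrix.smul_apply, Pi.smul_apply]
    split_ifs <;> rfl
  invFun S := coordsOf S.1
  left_inv x := coordsOf_symOfUpper x
  right_inv S := Subtype.ext (symOfUpper_coordsOf S.2)

/-- The congruence map in upper-triangular coordinates. -/
def coordMap (A : Matrix (Fin m) (Fin m) ℝ) : (SymIdx m → ℝ) →ₗ[ℝ] (SymIdx m → ℝ) :=
  (((eqL m).symm : symSubmodule m ≃ₗ[ℝ] (SymIdx m → ℝ)) :
      symSubmodule m →ₗ[ℝ] (SymIdx m → ℝ)) ∘ₗ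
    (congrSymMap A) ∘ₗ ((eqL m : (SymIdx m → ℝ) ≃ₗ[ℝ] symSubmodule m) :
      (SymIdx m → ℝ) →ₗ[ℝ] symSubmodule m)

lemma det_coordMap (A : Matrix (Fin m) (Fin m) ℝ) :
    LinearMap.det (coordMap A) = LinearMap.det (congrSymMap A) := by
  have := LinearMap.det_conj (congrSymMap A) (eqL m).symm
  simpa [coordMap] using this

lemma coordMap_apply (A : Matrix (Fin m) (Fin m) ℝ) (x : SymIdx m → ℝ) :
    coordMap A x = coordsOf (A * symOfUpper x * Aᵀ) := rfl

lemma prod_symIdx (d : Fin m → ℝ) :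
    (∏ p : SymIdx m, (d p.1.1 * d p.1.2)) = (∏ i, d i) ^ (m + 1) := by
  classical
  have h0 : (∏ p : SymIdx m, (d p.1.1 * d p.1.2))
      = ∏ p ∈ Finset.univ.filter (fun p : Fin m × Fin m => p.1 ≤ p.2), d p.1 * d p.2 :=
    (Finset.prod_subtype (Finset.univ.filter (fun p : Fin m × Fin m => p.1 ≤ p.2))
      (fun p => by simp) (fun p => d p.1 * d p.2)).symm
  rw [h0, Finset.prod_filter, Fintype.prod_prod_type]
  have h1 : ∀ i j : Fin m, (if i ≤ j then d i * d j else 1)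
      = (if i ≤ j then d i else 1) * (if i ≤ j then d j else 1) := by
    intro i j; split_ifs <;> simp
  simp_rw [h1, Finset.prod_mul_distrib]
  have h2 : ∀ i : Fin m, (∏ j, if i ≤ j then d i else 1) = d i ^ (m - (i : ℕ)) := by
    intro i
    rw [← Finset.prod_filter, Finset.prod_const]
    congr 1
    have : Finset.univ.filter (fun j => i ≤ j) = Finset.Ici i := by
      ext j; simp
    rw [this, Fin.card_Ici]
  have h3 : (∏ i : Fin m, ∏ j : Fin m, if i ≤ j then d j else 1)
      = ∏ j : Fin m, d j ^ ((j : ℕ) + 1) := by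
    rw [Finset.prod_comm]
    refine Finset.prod_congr rfl fun j _ => ?_
    rw [← Finset.prod_filter, Finset.prod_const]
    congr 1
    have : Finset.univ.filter (fun i => i ≤ j) = Finset.Iic j := by
      ext i; simp
    rw [this, Fin.card_Iic]
  rw [h3]
  simp_rw [h2]
  rw [← Finset.prod_mul_distrib, ← Finset.prod_pow]
  refine Finset.prod_congr rfl fun i _ => ?_
  rw [← pow_add]
  congr 1
  have := i.isLt
  omega

lemma coordMap_diagonal (d : Fin m → ℝ) :
    coordMap (Matrix.diagonal d)
      = Matrix.toLin' (Matrix.diagonal (fun p : SymIdx m => d p.1.1 * d p.1.2)) := by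
  apply LinearMap.ext; intro x
  funext p
  show (Matrix.diagonal d * symOfUpper x * (Matrix.diagonal d)ᵀ) p.1.1 p.1.2 = _
  rw [Matrix.diagonal_transpose, Matrix.mul_diagonal, Matrix.diagonal_mul,
    Matrix.toLin'_apply, Matrix.mulVec_diagonal]
  have hx : symOfUpper x p.1.1 p.1.2 = x p := by
    simp only [symOfUpper, Matrix.of_apply, dif_pos p.2]
  rw [hx]; ring

lemma det_congr_diagonal (d : Fin m → ℝ) :
    LinearMap.det (congrSymMap (Matrix.diagonal d)) = (∏ i, d i) ^ (m + 1) := by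
  rw [← det_coordMap, coordMap_diagonal, LinearMap.det_toLin', Matrix.det_diagonal,
    prod_symIdx]

lemma congrSymMap_mul (A B : Matrix (Fin m) (Fin m) ℝ) :
    congrSymMap (A * B) = (congrSymMap A).comp (congrSymMap B) := by
  apply LinearMap.ext; intro S
  apply Subtype.ext
  show (A * B) * S.1 * (A * B)ᵀ = A * (B * S.1 * Bᵀ) * Aᵀ
  rw [Matrix.transpose_mul]
  simp [Matrix.mul_assoc]

lemma congrSymMap_one : congrSymMap (1 : Matrix (Fin m) (Fin m) ℝ) = LinearMap.id := by
  apply LinearMap.ext; intro S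
  apply Subtype.ext
  show (1 : Matrix (Fin m) (Fin m) ℝ) * S.1 * (1 : Matrix (Fin m) (Fin m) ℝ)ᵀ = S.1
  simp

lemma abs_det_congr_transvection (t : Matrix.TransvectionStruct (Fin m) ℝ) :
    |LinearMap.det (congrSymMap t.toMatrix)| = 1 := by
  classical
  set dD : Fin m → ℝ := fun k => if k = t.i then -1 else 1 with hdD
  set D : Matrix (Fin m) (Fin m) ℝ := Matrix.diagonal dD with hDdef
  have hDD1 : D * D = 1 := by
    rw [hDdef, Matrix.diagonal_mul_diagonal]
    have h : (fun i => dD i * dD i) = fun _ : Fin m => (1 : ℝ) := by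
      funext k; simp only [hdD]
      split_ifs <;> norm_num
    rw [h, Matrix.diagonal_one]
  have hDE : D * Matrix.single t.i t.j t.c * D
      = Matrix.single t.i t.j (-t.c) := by
    ext a b
    rw [Matrix.mul_diagonal, Matrix.diagonal_mul]
    simp only [Matrix.single, Matrix.of_apply, hdD]
    by_cases hab : t.i = a ∧ t.j = b
    · obtain ⟨ha, hb⟩ := hab
      subst ha; subst hb
      simp [Ne.symm t.hij]
    · rw [if_neg hab, if_neg hab]; ring
  have ht : t.toMatrix = Matrix.transvection t.i t.j t.c := rfl
  have hDTD : D * t.toMatrix * D = Matrix.transvection t.i t.j (-t.c) := by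
    rw [ht, Matrix.transvection, Matrix.transvection, Matrix.mul_add, Matrix.add_mul,
      Matrix.mul_one, hDD1, hDE]
  have hTT' : t.toMatrix * Matrix.transvection t.i t.j (-t.c) = 1 := by
    rw [ht, Matrix.transvection_mul_transvection_same _ _ t.hij, add_neg_cancel,
      Matrix.transvection_zero]
  set x := LinearMap.det (congrSymMap t.toMatrix) with hx
  set y := LinearMap.det (congrSymMap (Matrix.transvection t.i t.j (-t.c))) with hy
  have hxy : x * y = 1 := by
    rw [hx, hy, ← LinearMap.det_comp, ← congrSymMap_mul, hTT', congrSymMap_one,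
      LinearMap.det_id]
  have hDsq : (LinearMap.det (congrSymMap D)) ^ 2 = 1 := by
    rw [hDdef, det_congr_diagonal, ← pow_mul, mul_comm (m + 1) 2, pow_mul, ← Finset.prod_pow]
    have : ∀ k : Fin m, dD k ^ 2 = 1 := by
      intro k; simp only [hdD]; split_ifs <;> norm_num
    simp_rw [this]
    simp
  have hyx : y = LinearMap.det (congrSymMap D) * (x * LinearMap.det (congrSymMap D)) := by
    rw [hy, ← hDTD, congrSymMap_mul, congrSymMap_mul, LinearMap.det_comp,
      LinearMap.det_comp, hx, mul_assoc]
  have hx2 : x * x = 1 := by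
    have : y = x * (LinearMap.det (congrSymMap D)) ^ 2 := by rw [hyx]; ring
    rw [this, hDsq, mul_one] at hxy
    exact hxy
  rcases mul_self_eq_one_iff.mp hx2 with h | h <;> rw [h] <;> norm_num

lemma abs_det_congrSymMap (A : Matrix (Fin m) (Fin m) ℝ) :
    |LinearMap.det (congrSymMap A)| = |A.det| ^ (m + 1) := by
  refine Matrix.diagonal_transvection_induction
    (fun M => |LinearMap.det (congrSymMap M)| = |M.det| ^ (m + 1)) A ?_ ?_ ?_
  · intro D _
    rw [det_congr_diagonal, Matrix.det_diagonal, abs_pow]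
  · intro t
    rw [abs_det_congr_transvection, Matrix.TransvectionStruct.det, abs_one, one_pow]
  · intro B₁ B₂ h1 h2
    rw [congrSymMap_mul, LinearMap.det_comp, abs_mul, h1, h2, Matrix.det_mul, abs_mul,
      mul_pow]

end JacobianAux

/-- Jacobian of the congruence transformation `S ↦ A * S * Aᵀ + C` on `m × m`
real symmetric matrices: it scales Lebesgue measure on symmetric matrices by
`|det A|^(m+1)`; equivalently, the linear endomorphism `S ↦ A * S * Aᵀ` of the space of
symmetric matrices has determinant of absolute value `|det A|^(m+1)`. -/
theorem jacobian_congruence_transformation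
    {m : ℕ} (A : Matrix (Fin m) (Fin m) ℝ) (hA : IsUnit A.det)
    (C : Matrix (Fin m) (Fin m) ℝ) (hC : Cᵀ = C) :
    (∀ E : Set (Matrix (Fin m) (Fin m) ℝ), MeasurableSet E → (∀ S ∈ E, Sᵀ = S) →
        symMeasure m ((fun S => A * S * Aᵀ + C) '' E) =
          ENNReal.ofReal (|A.det| ^ (m + 1)) * symMeasure m E) ∧
      |LinearMap.det (congrSymMap A)| = |A.det| ^ (m + 1) := by
  classical
  have hdet := JacobianAux.abs_det_congrSymMap A
  refine ⟨?_, hdet⟩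
  intro E hE hEsym
  have hAT : IsUnit (Aᵀ).det := by rwa [Matrix.det_transpose]
  set φ : Matrix (Fin m) (Fin m) ℝ → Matrix (Fin m) (Fin m) ℝ :=
    fun S => A * S * Aᵀ + C with hφ
  set φinv : Matrix (Fin m) (Fin m) ℝ → Matrix (Fin m) (Fin m) ℝ :=
    fun S => A⁻¹ * (S - C) * (Aᵀ)⁻¹ with hφinv
  have hleft : Function.LeftInverse φinv φ := by
    intro S
    simp only [hφ, hφinv, add_sub_cancel_right]
    rw [Matrix.mul_assoc A S Aᵀ, Matrix.nonsing_inv_mul_cancel_left _ _ hA,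
      Matrix.mul_nonsing_inv_cancel_right _ _ hAT]
  have hright : Function.RightInverse φinv φ := by
    intro S
    simp only [hφ, hφinv]
    rw [Matrix.mul_assoc (A⁻¹) (S - C) ((Aᵀ)⁻¹), Matrix.mul_nonsing_inv_cancel_left _ _ hA,
      Matrix.nonsing_inv_mul_cancel_right _ _ hAT, sub_add_cancel]
  have himg : φ '' E = φinv ⁻¹' E := by
    rw [Set.image_eq_preimage_of_inverse hleft hright]
  -- measurability of the maps involved
  have hmeas_sym : Measurable (symOfUpper (m := m)) := by
    apply measurable_pi_lambda
    intro i
    apply measurable_pi_lambda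
    intro j
    show Measurable fun x : JacobianAux.SymIdx m → ℝ => symOfUpper x i j
    simp only [symOfUpper, Matrix.of_apply]
    split_ifs with h
    · exact measurable_pi_apply _
    · exact measurable_pi_apply _
  have hentry : ∀ k l : Fin m, Measurable fun S : Matrix (Fin m) (Fin m) ℝ => S k l :=
    fun k l => (measurable_pi_apply l).comp (measurable_pi_apply k)
  have hmeas_φinv : Measurable φinv := by
    apply measurable_pi_lambda
    intro a
    apply measurable_pi_lambda
    intro b
    show Measurable fun S : Matrix (Fin m) (Fin m) ℝ => (A⁻¹ * (S - C) * (Aᵀ)⁻¹) a b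
    simp only [Matrix.mul_apply, Matrix.sub_apply]
    apply Finset.measurable_sum
    intro l _
    apply Measurable.mul _ measurable_const
    apply Finset.measurable_sum
    intro k _
    exact measurable_const.mul ((hentry k l).sub measurable_const)
  have hφE : MeasurableSet (φ '' E) := by
    rw [himg]; exact hmeas_φinv hE
  -- rewrite both measures as Lebesgue measures of coordinate sets
  rw [symMeasure, Measure.map_apply hmeas_sym hφE, Measure.map_apply hmeas_sym hE]
  have hset : symOfUpper ⁻¹' (φ '' E)
      = (fun x => JacobianAux.coordMap A x + JacobianAux.coordsOf C) ''
          (symOfUpper ⁻¹' E) := by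
    ext x
    constructor
    · rintro ⟨S, hSE, hSx⟩
      have hSx' : A * S * Aᵀ + C = symOfUpper x := hSx
      refine ⟨JacobianAux.coordsOf S, ?_, ?_⟩
      · show symOfUpper (JacobianAux.coordsOf S) ∈ E
        rw [JacobianAux.symOfUpper_coordsOf (hEsym S hSE)]
        exact hSE
      · show JacobianAux.coordMap A (JacobianAux.coordsOf S) + JacobianAux.coordsOf C = x
        rw [JacobianAux.coordMap_apply, JacobianAux.symOfUpper_coordsOf (hEsym S hSE),
          ← JacobianAux.coordsOf_add, hSx', JacobianAux.coordsOf_symOfUpper]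
    · rintro ⟨y, hy, hyx⟩
      have hyx' : JacobianAux.coordMap A y + JacobianAux.coordsOf C = x := hyx
      refine ⟨symOfUpper y, hy, ?_⟩
      have hsymm : (A * symOfUpper y * Aᵀ + C)ᵀ = A * symOfUpper y * Aᵀ + C := by
        rw [Matrix.transpose_add, hC, Matrix.transpose_mul, Matrix.transpose_mul,
          Matrix.transpose_transpose, JacobianAux.symOfUpper_transpose, Matrix.mul_assoc]
      have hx' : x = JacobianAux.coordsOf (A * symOfUpper y * Aᵀ + C) := by
        rw [← hyx', JacobianAux.coordMap_apply, JacobianAux.coordsOf_add]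
      show A * symOfUpper y * Aᵀ + C = symOfUpper x
      rw [hx', JacobianAux.symOfUpper_coordsOf hsymm]
  rw [hset]
  have himage : (fun x => JacobianAux.coordMap A x + JacobianAux.coordsOf C) ''
        (symOfUpper ⁻¹' E)
      = (· + JacobianAux.coordsOf C) '' (JacobianAux.coordMap A '' (symOfUpper ⁻¹' E)) := by
    rw [Set.image_image]
  rw [himage, Set.image_add_right, measure_preimage_add_right]
  rw [Measure.addHaar_image_linearMap]
  congr 1
  rw [JacobianAux.det_coordMap, hdet]

end
end

section
/- Real case (β = 1). Let m ≥ 1, let A be an m×m real positive definite matrix and let B be an m×m real upper triangular invertible matrix. Then BᵀAB and BᵀB are positive definite, and for every weight κ = (k_1,…,k_m) ∈ ℝ^m one has q_κ(BᵀAB) = q_κ(BᵀB) · q_κ(A). Consequently q_κ(B⁻ᵀ A B⁻¹) = q_κ(BᵀB)⁻¹ · q_κ(A). -/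
open Matrix MeasureTheory ProbabilityTheory
open scoped ENNReal NNReal Classical

noncomputable section

-- helper: sum over Fin m of function vanishing above k equals sum over Fin k
lemma sum_fin_castLE {m k : ℕ} (hk : k ≤ m) (f : Fin m → ℝ)
    (hf : ∀ p : Fin m, k ≤ (p : ℕ) → f p = 0) :
    ∑ p : Fin m, f p = ∑ p : Fin k, f (Fin.castLE hk p) := by
  classical
  have h1 : ∑ p : Fin k, f (Fin.castLE hk p)
      = ∑ p ∈ Finset.univ.map (Fin.castLEEmb hk), f p := by
    rw [Finset.sum_map]; rfl
  rw [h1]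
  refine (Finset.sum_subset (Finset.subset_univ _) ?_).symm
  intro p _ hp
  apply hf
  by_contra h
  push_neg at h
  exact hp (Finset.mem_map.mpr ⟨⟨(p : ℕ), h⟩, Finset.mem_univ _, Fin.ext rfl⟩)

lemma blockTriangular_submatrix_castLE {m k : ℕ} (hk : k ≤ m)
    {B : Matrix (Fin m) (Fin m) ℝ} (hB : B.BlockTriangular id) :
    (B.submatrix (Fin.castLE hk) (Fin.castLE hk)).BlockTriangular id := by
  intro i j hij
  exact hB (by simpa using hij)

lemma submatrix_conj_mul {m k : ℕ} (hk : k ≤ m)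
    (A B : Matrix (Fin m) (Fin m) ℝ) (hB : B.BlockTriangular id) :
    (Bᵀ * A * B).submatrix (Fin.castLE hk) (Fin.castLE hk) =
      (B.submatrix (Fin.castLE hk) (Fin.castLE hk))ᵀ *
        A.submatrix (Fin.castLE hk) (Fin.castLE hk) *
        B.submatrix (Fin.castLE hk) (Fin.castLE hk) := by
  ext a b
  simp only [Matrix.submatrix_apply, Matrix.mul_apply, Matrix.transpose_apply]
  rw [sum_fin_castLE hk (fun q => (∑ p, B p (Fin.castLE hk a) * A p q) * B q (Fin.castLE hk b))]
  · refine Finset.sum_congr rfl fun q _ => ?_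
    congr 1
    rw [sum_fin_castLE hk (fun p => B p (Fin.castLE hk a) * A p (Fin.castLE hk q))]
    intro p hp
    have : B p (Fin.castLE hk a) = 0 :=
      hB (show (Fin.castLE hk a) < p by
        rw [Fin.lt_def]; simpa using lt_of_lt_of_le a.isLt hp)
    rw [this, zero_mul]
  · intro q hq
    have : B q (Fin.castLE hk b) = 0 :=
      hB (show (Fin.castLE hk b) < q by
        rw [Fin.lt_def]; simpa using lt_of_lt_of_le b.isLt hq)
    rw [this, mul_zero]


lemma lpdet_conj {m : ℕ} (A B : Matrix (Fin m) (Fin m) ℝ) (hB : B.BlockTriangular id)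
    (i : Fin m) : lpdet (Bᵀ * A * B) i = lpdet B i ^ 2 * lpdet A i := by
  unfold lpdet
  rw [submatrix_conj_mul i.isLt A B hB, Matrix.det_mul, Matrix.det_mul, Matrix.det_transpose]
  ring

lemma lpdet_one {m : ℕ} (i : Fin m) : lpdet (1 : Matrix (Fin m) (Fin m) ℝ) i = 1 := by
  unfold lpdet
  rw [Matrix.submatrix_one _ (Fin.castLE_injective _), Matrix.det_one]

lemma lpdet_BtB {m : ℕ} (B : Matrix (Fin m) (Fin m) ℝ) (hB : B.BlockTriangular id)
    (i : Fin m) : lpdet (Bᵀ * B) i = lpdet B i ^ 2 := by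
  have h : Bᵀ * B = Bᵀ * 1 * B := by rw [Matrix.mul_one]
  rw [h, lpdet_conj 1 B hB, lpdet_one, mul_one]

lemma lpdet_triangular {m : ℕ} (B : Matrix (Fin m) (Fin m) ℝ) (hB : B.BlockTriangular id)
    (i : Fin m) :
    lpdet B i = ∏ j : Fin ((i : ℕ) + 1), B (Fin.castLE i.isLt j) (Fin.castLE i.isLt j) := by
  unfold lpdet
  rw [Matrix.det_of_upperTriangular (blockTriangular_submatrix_castLE i.isLt hB)]
  rfl

lemma diag_ne_zero {m : ℕ} (B : Matrix (Fin m) (Fin m) ℝ) (hB : B.BlockTriangular id)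
    (hBu : IsUnit B.det) (j : Fin m) : B j j ≠ 0 := by
  have h : B.det = ∏ i : Fin m, B i i := Matrix.det_of_upperTriangular hB
  have h0 : B.det ≠ 0 := hBu.ne_zero
  rw [h] at h0
  exact Finset.prod_ne_zero_iff.mp h0 j (Finset.mem_univ _)

lemma lpdet_triangular_ne_zero {m : ℕ} (B : Matrix (Fin m) (Fin m) ℝ)
    (hB : B.BlockTriangular id) (hBu : IsUnit B.det) (i : Fin m) : lpdet B i ≠ 0 := by
  rw [lpdet_triangular B hB i]
  exact Finset.prod_ne_zero_iff.mpr fun j _ => diag_ne_zero B hB hBu _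

lemma inv_diag {m : ℕ} (B : Matrix (Fin m) (Fin m) ℝ) (hB : B.BlockTriangular id)
    (hBu : IsUnit B.det) (j : Fin m) : B⁻¹ j j = (B j j)⁻¹ := by
  letI := B.invertibleOfIsUnitDet hBu
  have hBinv : (B⁻¹).BlockTriangular id := Matrix.blockTriangular_inv_of_blockTriangular hB
  have h1 : (B * B⁻¹) j j = 1 := by rw [Matrix.mul_nonsing_inv B hBu]; simp [Matrix.one_apply]
  rw [Matrix.mul_apply] at h1
  have h2 : ∑ k, B j k * B⁻¹ k j = B j j * B⁻¹ j j := by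
    refine Finset.sum_eq_single j (fun k _ hk => ?_) (fun h => absurd (Finset.mem_univ _) h)
    rcases lt_or_gt_of_ne hk with hlt | hgt
    · rw [hB (show id k < id j from hlt), zero_mul]
    · rw [hBinv (show id j < id k from hgt), mul_zero]
  rw [h2] at h1
  exact (inv_eq_of_mul_eq_one_right h1).symm

lemma lpdet_inv {m : ℕ} (B : Matrix (Fin m) (Fin m) ℝ) (hB : B.BlockTriangular id)
    (hBu : IsUnit B.det) (i : Fin m) : lpdet B⁻¹ i = (lpdet B i)⁻¹ := by
  letI := B.invertibleOfIsUnitDet hBu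
  have hBinv : (B⁻¹).BlockTriangular id := Matrix.blockTriangular_inv_of_blockTriangular hB
  rw [lpdet_triangular B⁻¹ hBinv i, lpdet_triangular B hB i, ← Finset.prod_inv_distrib]
  exact Finset.prod_congr rfl fun j _ => inv_diag B hB hBu _

lemma transpose_eq_of_posDef {m : ℕ} {A : Matrix (Fin m) (Fin m) ℝ} (hA : A.PosDef) :
    Aᵀ = A := by
  rw [← Matrix.conjTranspose_eq_transpose_of_trivial]; exact hA.1

lemma posDef_conj {m : ℕ} {A : Matrix (Fin m) (Fin m) ℝ} (B : Matrix (Fin m) (Fin m) ℝ)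
    (hA : A.PosDef) (hBu : IsUnit B.det) : (Bᵀ * A * B).PosDef := by
  refine Matrix.PosDef.of_dotProduct_mulVec_pos ?_ ?_
  · show (Bᵀ * A * B)ᴴ = _
    rw [Matrix.conjTranspose_eq_transpose_of_trivial, Matrix.transpose_mul,
      Matrix.transpose_mul, Matrix.transpose_transpose, transpose_eq_of_posDef hA,
      Matrix.mul_assoc]
  · intro x hx
    have hst : ∀ v : Fin m → ℝ, star v = v := fun v => funext fun _ => star_trivial _
    have hBx : B *ᵥ x ≠ 0 := by
      intro h
      apply hx
      have hinj := Matrix.mulVec_injective_iff_isUnit.mpr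
        ((Matrix.isUnit_iff_isUnit_det B).mpr hBu)
      exact hinj (by rw [h, Matrix.mulVec_zero])
    have key : star x ⬝ᵥ (Bᵀ * A * B) *ᵥ x = star (B *ᵥ x) ⬝ᵥ A *ᵥ (B *ᵥ x) := by
      rw [hst, hst, ← Matrix.mulVec_mulVec, ← Matrix.mulVec_mulVec,
        Matrix.dotProduct_mulVec x Bᵀ, Matrix.vecMul_transpose]
    rw [key]
    exact hA.dotProduct_mulVec_pos hBx

lemma posDef_submatrix_castLE {m k : ℕ} {A : Matrix (Fin m) (Fin m) ℝ} (hA : A.PosDef)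
    (hk : k ≤ m) : (A.submatrix (Fin.castLE hk) (Fin.castLE hk)).PosDef := by
  have hsymm : ∀ p q, A q p = A p q := fun p q => by
    have := congrFun (congrFun (transpose_eq_of_posDef hA) p) q
    simpa [Matrix.transpose_apply] using this
  refine Matrix.PosDef.of_dotProduct_mulVec_pos ?_ ?_
  · show (A.submatrix (Fin.castLE hk) (Fin.castLE hk))ᴴ = _
    rw [Matrix.conjTranspose_eq_transpose_of_trivial]
    ext a b
    exact hsymm _ _
  · intro x hx
    set y : Fin m → ℝ := fun j => if h : (j : ℕ) < k then x ⟨(j : ℕ), h⟩ else 0 with hy_def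
    have hyx : ∀ a : Fin k, y (Fin.castLE hk a) = x a := by
      intro a
      simp only [hy_def]
      rw [dif_pos (show ((Fin.castLE hk a : Fin m) : ℕ) < k from a.isLt)]
      exact congrArg x (Fin.ext rfl)
    have hy0 : ∀ p : Fin m, k ≤ (p : ℕ) → y p = 0 := by
      intro p hp
      simp only [hy_def]
      rw [dif_neg (by omega)]
    have hy : y ≠ 0 := by
      intro h
      apply hx
      funext a
      have := congrFun h (Fin.castLE hk a)
      rw [hyx a] at this
      exact this
    have hst : ∀ n (v : Fin n → ℝ), star v = v := fun n v => funext fun _ => star_trivial _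
    have key : star x ⬝ᵥ (A.submatrix (Fin.castLE hk) (Fin.castLE hk)) *ᵥ x
        = star y ⬝ᵥ A *ᵥ y := by
      rw [hst, hst]
      simp only [dotProduct, Matrix.mulVec, Matrix.submatrix_apply]
      rw [sum_fin_castLE hk (fun p => y p * ∑ q, A p q * y q)
        (fun p hp => by simp only [hy0 p hp, zero_mul])]
      refine Finset.sum_congr rfl fun a _ => ?_
      rw [hyx a]
      congr 1
      rw [sum_fin_castLE hk (fun q => A (Fin.castLE hk a) q * y q)
        (fun q hq => by simp only [hy0 q hq, mul_zero])]
      exact Finset.sum_congr rfl fun b _ => by rw [hyx b]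
    rw [key]
    exact hA.dotProduct_mulVec_pos hy

lemma lpdet_pos_of_posDef {m : ℕ} {A : Matrix (Fin m) (Fin m) ℝ} (hA : A.PosDef)
    (i : Fin m) : 0 < lpdet A i :=
  (posDef_submatrix_castLE hA i.isLt).det_pos

/-- For `A` positive definite and `B` upper triangular invertible,
`BᵀAB` and `BᵀB` are positive definite and `q_κ(BᵀAB) = q_κ(BᵀB) q_κ(A)`; consequently
`q_κ(B⁻ᵀ A B⁻¹) = q_κ(BᵀB)⁻¹ q_κ(A)`. -/
theorem qWeight_triangular_congruence
    {m : ℕ} (hm : 1 ≤ m) (A B : Matrix (Fin m) (Fin m) ℝ)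
    (hA : A.PosDef) (hB : B.BlockTriangular id) (hBu : IsUnit B.det) :
    (Bᵀ * A * B).PosDef ∧ (Bᵀ * B).PosDef ∧
      ∀ κ : Fin m → ℝ,
        qWeight κ (Bᵀ * A * B) = qWeight κ (Bᵀ * B) * qWeight κ A ∧
        qWeight κ ((B⁻¹)ᵀ * A * B⁻¹) = (qWeight κ (Bᵀ * B))⁻¹ * qWeight κ A := by
  classical
  letI := B.invertibleOfIsUnitDet hBu
  have hBinv : (B⁻¹).BlockTriangular id := Matrix.blockTriangular_inv_of_blockTriangular hB
  have hBinvu : IsUnit (B⁻¹).det := by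
    rw [Matrix.det_nonsing_inv]
    exact (Ring.inverse_eq_inv B.det ▸ (IsUnit.inv hBu.ne_zero.isUnit : IsUnit (B.det)⁻¹))
  have hBtB : (Bᵀ * B).PosDef := by
    have := posDef_conj (A := 1) B Matrix.PosDef.one hBu
    rwa [Matrix.mul_one] at this
  refine ⟨posDef_conj B hA hBu, hBtB, fun κ => ?_⟩
  set E : Fin m → ℝ := fun i => κ i - if h : (i : ℕ) + 1 < m then κ ⟨(i : ℕ) + 1, h⟩ else 0
    with hE
  have hq : ∀ C : Matrix (Fin m) (Fin m) ℝ, qWeight κ C = ∏ i, lpdet C i ^ E i :=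
    fun C => rfl
  have hApos : ∀ i, (0 : ℝ) ≤ lpdet A i := fun i => (lpdet_pos_of_posDef hA i).le
  constructor
  · rw [hq, hq, hq]
    rw [← Finset.prod_mul_distrib]
    refine Finset.prod_congr rfl fun i _ => ?_
    rw [lpdet_conj A B hB, lpdet_BtB B hB,
      Real.mul_rpow (sq_nonneg _) (hApos i)]
  · rw [hq, hq, hq, ← Finset.prod_inv_distrib, ← Finset.prod_mul_distrib]
    refine Finset.prod_congr rfl fun i _ => ?_
    rw [lpdet_conj A B⁻¹ hBinv, lpdet_inv B hB hBu, inv_pow,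
      Real.mul_rpow (inv_nonneg.mpr (sq_nonneg _)) (hApos i),
      Real.inv_rpow (sq_nonneg _), lpdet_BtB B hB]


end
end

section
/- Let X be an n×m real matrix and U an m×m real positive definite matrix, so that U + XᵀX is positive definite. Set R := X · u(U + XᵀX)⁻¹. Then I_m − RᵀR is positive definite, its Cholesky factor is u(I_m − RᵀR) = u(U) · u(U + XᵀX)⁻¹ (which is upper triangular with positive diagonal entries), and consequently R · u(I_m − RᵀR)⁻¹ = X · u(U)⁻¹. -/
open Matrix MeasureTheory ProbabilityTheory
open scoped ENNReal NNReal Classical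

noncomputable section

section CholAuxSec

open scoped InnerProductSpace
open InnerProductSpace

/-- The diagonal coefficient of a Gram-Schmidt vector in the original basis is `1`. -/
theorem gramSchmidt_diagonal' {𝕜 : Type*} {E : Type*} [RCLike 𝕜] [NormedAddCommGroup E]
    [InnerProductSpace 𝕜 E] {ι : Type*} [LinearOrder ι] [LocallyFiniteOrderBot ι]
    [WellFoundedLT ι] (i : ι) (b : Module.Basis ι 𝕜 E) :
    b.repr (gramSchmidt 𝕜 b i) i = 1 := by
  rw [gramSchmidt_def 𝕜 b i, map_sub, map_sum]
  simp only [Finsupp.sub_apply, Finsupp.coe_finset_sum, Finset.sum_apply]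
  rw [Module.Basis.repr_self, Finsupp.single_eq_same]
  have hz : ∀ j ∈ Finset.Iio i,
      (b.repr (((𝕜 ∙ gramSchmidt 𝕜 b j).starProjection (b i) : E))) i = 0 := by
    intro j hj
    rw [Submodule.starProjection_singleton, _root_.map_smul, Finsupp.smul_apply,
      gramSchmidt_triangular (Finset.mem_Iio.mp hj) b, smul_zero]
  rw [Finset.sum_eq_zero hz, sub_zero]

namespace CholAux

open Matrix

instance (priority := 10000) {k : ℕ} : WellFoundedLT (Fin k) := inferInstance

variable {m : ℕ}

theorem lowerInv_diag {S : Matrix (Fin m) (Fin m) ℝ} (hS : S.PosDef) (i : Fin m) :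
    LDL.lowerInv hS i i = 1 := by
  have h := @gramSchmidt_diagonal' ℝ (Fin m → ℝ) _ (Sᵀ.toNormedAddCommGroup hS.transpose)
    (Sᵀ.toInnerProductSpace hS.transpose.posSemidef) (Fin m) _ _ _ i (Pi.basisFun ℝ (Fin m))
  rw [Pi.basisFun_repr] at h
  rw [LDL.lowerInv]
  exact h

theorem diagEntries_pos {S : Matrix (Fin m) (Fin m) ℝ} (hS : S.PosDef) (i : Fin m) :
    0 < LDL.diagEntries hS i := by
  have hrow : LDL.lowerInv hS i ≠ 0 := by
    intro h
    have h1 : LDL.lowerInv hS i i = 1 := lowerInv_diag hS i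
    rw [h] at h1
    simp at h1
  have := hS.dotProduct_mulVec_pos hrow
  have heq : LDL.diagEntries hS i =
      star (LDL.lowerInv hS i) ⬝ᵥ (S *ᵥ LDL.lowerInv hS i) := by
    rw [LDL.diagEntries, EuclideanSpace.inner_toLp_toLp]
    simp only [star_trivial, dotProduct_comm]
  rw [heq]
  exact this

/-- Diagonal entries of a product of upper triangular matrices. -/
theorem diag_mul_upper {M N : Matrix (Fin m) (Fin m) ℝ}
    (hM : M.BlockTriangular id) (hN : N.BlockTriangular id) (i : Fin m) :
    (M * N) i i = M i i * N i i := by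
  rw [Matrix.mul_apply]
  refine Finset.sum_eq_single i (fun k _ hk => ?_) (fun h => absurd (Finset.mem_univ i) h)
  rcases lt_or_gt_of_ne hk with h | h
  · rw [hM (show (id k : Fin m) < id i from h), zero_mul]
  · rw [hN (show (id i : Fin m) < id k from h), mul_zero]

/-- Diagonal entries of a product of lower triangular matrices. -/
theorem diag_mul_lower {M N : Matrix (Fin m) (Fin m) ℝ}
    (hM : M.BlockTriangular (OrderDual.toDual : Fin m → (Fin m)ᵒᵈ))
    (hN : N.BlockTriangular (OrderDual.toDual : Fin m → (Fin m)ᵒᵈ)) (i : Fin m) :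
    (M * N) i i = M i i * N i i := by
  rw [Matrix.mul_apply]
  refine Finset.sum_eq_single i (fun k _ hk => ?_) (fun h => absurd (Finset.mem_univ i) h)
  rcases lt_or_gt_of_ne hk with h | h
  · rw [hN (OrderDual.toDual_lt_toDual.mpr h), mul_zero]
  · rw [hM (OrderDual.toDual_lt_toDual.mpr h), zero_mul]

theorem deq_eq : (fun a b => LinearOrder.toDecidableEq a b : DecidableEq (Fin m)) =
    instDecidableEqFin m :=
  Subsingleton.elim _ _

theorem lower_eq {S : Matrix (Fin m) (Fin m) ℝ} (hS : S.PosDef) :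
    LDL.lower hS = (LDL.lowerInv hS)⁻¹ := by
  rw [LDL.lower, deq_eq]

theorem diag_eq {S : Matrix (Fin m) (Fin m) ℝ} (hS : S.PosDef) :
    LDL.diag hS = Matrix.diagonal (LDL.diagEntries hS) := by
  rw [LDL.diag, deq_eq]

theorem lowerInv_det_isUnit {S : Matrix (Fin m) (Fin m) ℝ} (hS : S.PosDef) :
    IsUnit (LDL.lowerInv hS).det := by
  have hLinv : (LDL.lowerInv hS).BlockTriangular (OrderDual.toDual : Fin m → (Fin m)ᵒᵈ) :=
    fun i j hij => LDL.lowerInv_triangular hS hij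
  rw [Matrix.det_of_lowerTriangular _ hLinv]
  simp [lowerInv_diag hS]

theorem lower_lowerTriangular {S : Matrix (Fin m) (Fin m) ℝ} (hS : S.PosDef) :
    (LDL.lower hS).BlockTriangular (OrderDual.toDual : Fin m → (Fin m)ᵒᵈ) := by
  have hLinv : (LDL.lowerInv hS).BlockTriangular (OrderDual.toDual : Fin m → (Fin m)ᵒᵈ) :=
    fun i j hij => LDL.lowerInv_triangular hS hij
  haveI : Invertible (LDL.lowerInv hS) :=
    (LDL.lowerInv hS).invertibleOfIsUnitDet (lowerInv_det_isUnit hS)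
  rw [lower_eq hS]
  exact Matrix.blockTriangular_inv_of_blockTriangular hLinv

theorem lower_diag {S : Matrix (Fin m) (Fin m) ℝ} (hS : S.PosDef) (i : Fin m) :
    LDL.lower hS i i = 1 := by
  have hLinv : (LDL.lowerInv hS).BlockTriangular (OrderDual.toDual : Fin m → (Fin m)ᵒᵈ) :=
    fun i j hij => LDL.lowerInv_triangular hS hij
  have h1 : (LDL.lowerInv hS * LDL.lower hS) i i = 1 := by
    rw [lower_eq hS, Matrix.mul_nonsing_inv _ (lowerInv_det_isUnit hS)]
    simp
  rw [diag_mul_lower hLinv (lower_lowerTriangular hS), lowerInv_diag hS] at h1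
  simpa using h1

theorem cholU_eq {A : Matrix (Fin m) (Fin m) ℝ} (hA : A.PosDef) :
    cholU A = Matrix.diagonal (fun i => Real.sqrt (LDL.diagEntries hA i)) * (LDL.lower hA)ᵀ := by
  rw [cholU, dif_pos hA]

theorem cholU_upperTriangular {A : Matrix (Fin m) (Fin m) ℝ} (hA : A.PosDef) :
    (cholU A).BlockTriangular id := by
  rw [cholU_eq hA]
  refine (Matrix.blockTriangular_diagonal _).mul ?_
  intro i j hij
  exact lower_lowerTriangular hA (OrderDual.toDual_lt_toDual.mpr hij)

theorem cholU_diag_pos {A : Matrix (Fin m) (Fin m) ℝ} (hA : A.PosDef) (i : Fin m) :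
    0 < cholU A i i := by
  rw [cholU_eq hA, Matrix.diagonal_mul, Matrix.transpose_apply, lower_diag hA, mul_one]
  exact Real.sqrt_pos.mpr (diagEntries_pos hA i)

theorem cholU_spec {A : Matrix (Fin m) (Fin m) ℝ} (hA : A.PosDef) :
    (cholU A)ᵀ * cholU A = A := by
  rw [cholU_eq hA]
  have hDD : Matrix.diagonal (fun i => Real.sqrt (LDL.diagEntries hA i)) *
      Matrix.diagonal (fun i => Real.sqrt (LDL.diagEntries hA i)) = LDL.diag hA := by
    rw [Matrix.diagonal_mul_diagonal, diag_eq hA]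
    exact congrArg Matrix.diagonal (funext fun i => Real.mul_self_sqrt (diagEntries_pos hA i).le)
  calc (Matrix.diagonal (fun i => Real.sqrt (LDL.diagEntries hA i)) * (LDL.lower hA)ᵀ)ᵀ *
        (Matrix.diagonal (fun i => Real.sqrt (LDL.diagEntries hA i)) * (LDL.lower hA)ᵀ)
      = LDL.lower hA * (Matrix.diagonal (fun i => Real.sqrt (LDL.diagEntries hA i)) *
          Matrix.diagonal (fun i => Real.sqrt (LDL.diagEntries hA i))) * (LDL.lower hA)ᵀ := by
        rw [Matrix.transpose_mul, Matrix.transpose_transpose, Matrix.diagonal_transpose]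
        simp only [Matrix.mul_assoc]
    _ = LDL.lower hA * LDL.diag hA * (LDL.lower hA)ᵀ := by rw [hDD, Matrix.mul_assoc]
    _ = A := by
        have := LDL.lower_conj_diag hA
        rwa [Matrix.conjTranspose_eq_transpose_of_trivial] at this

theorem upper_invertible {T : Matrix (Fin m) (Fin m) ℝ}
    (hT : T.BlockTriangular id) (hTd : ∀ i, 0 < T i i) : IsUnit T.det := by
  rw [Matrix.det_of_upperTriangular hT]
  exact (Finset.prod_pos fun i _ => hTd i).ne'.isUnit

theorem inv_diag {T : Matrix (Fin m) (Fin m) ℝ} [Invertible T]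
    (hT : T.BlockTriangular id) (i : Fin m) : T⁻¹ i i = (T i i)⁻¹ := by
  have h1 : (T * T⁻¹) i i = 1 := by
    rw [Matrix.mul_nonsing_inv T (Matrix.isUnit_det_of_invertible T)]; simp
  rw [diag_mul_upper hT (Matrix.blockTriangular_inv_of_blockTriangular hT)] at h1
  exact eq_inv_of_mul_eq_one_right h1

theorem transpose_upper {T : Matrix (Fin m) (Fin m) ℝ} (hT : T.BlockTriangular id) :
    Tᵀ.BlockTriangular (OrderDual.toDual : Fin m → (Fin m)ᵒᵈ) := fun _ _ hij =>
  hT (OrderDual.toDual_lt_toDual.mp hij)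

/-- Uniqueness of the Cholesky factorisation. -/
theorem cholU_unique {A T : Matrix (Fin m) (Fin m) ℝ} (hA : A.PosDef)
    (hT : T.BlockTriangular id) (hTd : ∀ i, 0 < T i i) (hTA : Tᵀ * T = A) :
    cholU A = T := by
  set T₁ := cholU A with hT₁def
  have hT₁ : T₁.BlockTriangular id := cholU_upperTriangular hA
  have hT₁d : ∀ i, 0 < T₁ i i := cholU_diag_pos hA
  have hT₁A : T₁ᵀ * T₁ = A := cholU_spec hA
  haveI : Invertible T := T.invertibleOfIsUnitDet (upper_invertible hT hTd)
  haveI : Invertible T₁ := T₁.invertibleOfIsUnitDet (upper_invertible hT₁ hT₁d)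
  haveI : Invertible T₁ᵀ := T₁ᵀ.invertibleOfIsUnitDet (by
    rw [Matrix.det_transpose]; exact upper_invertible hT₁ hT₁d)
  set M := T₁ * T⁻¹ with hMdef
  have hMu : M.BlockTriangular id :=
    hT₁.mul (Matrix.blockTriangular_inv_of_blockTriangular hT)
  have h1 : T₁ᵀ * M = Tᵀ := by
    rw [hMdef, ← Matrix.mul_assoc, hT₁A, ← hTA, Matrix.mul_assoc,
      Matrix.mul_nonsing_inv T (Matrix.isUnit_det_of_invertible T), Matrix.mul_one]
  have hMeq : M = (T₁ᵀ)⁻¹ * Tᵀ := by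
    rw [← h1, ← Matrix.mul_assoc, Matrix.nonsing_inv_mul T₁ᵀ (Matrix.isUnit_det_of_invertible T₁ᵀ),
      Matrix.one_mul]
  have hMl : M.BlockTriangular (OrderDual.toDual : Fin m → (Fin m)ᵒᵈ) := by
    rw [hMeq]
    exact (Matrix.blockTriangular_inv_of_blockTriangular (transpose_upper hT₁)).mul
      (transpose_upper hT)
  have hoff : ∀ i j : Fin m, i ≠ j → M i j = 0 := by
    intro i j hij
    rcases lt_or_gt_of_ne hij with h | h
    · exact hMl (OrderDual.toDual_lt_toDual.mpr h)
    · exact hMu (show (id j : Fin m) < id i from h)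
  have hMd : ∀ i, 0 < M i i := by
    intro i
    rw [hMdef, diag_mul_upper hT₁ (Matrix.blockTriangular_inv_of_blockTriangular hT),
      inv_diag hT]
    exact mul_pos (hT₁d i) (inv_pos.mpr (hTd i))
  have hMM : Mᵀ * M = 1 := by
    have h2 : Mᵀ = (T⁻¹)ᵀ * T₁ᵀ := by rw [hMdef, Matrix.transpose_mul]
    rw [h2, hMdef, Matrix.mul_assoc, ← Matrix.mul_assoc T₁ᵀ, hT₁A, ← hTA,
      Matrix.mul_assoc Tᵀ, Matrix.mul_nonsing_inv T (Matrix.isUnit_det_of_invertible T),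
      Matrix.mul_one, ← Matrix.transpose_mul,
      Matrix.mul_nonsing_inv T (Matrix.isUnit_det_of_invertible T), Matrix.transpose_one]
  have hM1 : M = 1 := by
    ext i j
    by_cases hij : i = j
    · subst hij
      have h1 : (Mᵀ * M) i i = 1 := by rw [hMM]; simp
      rw [Matrix.mul_apply] at h1
      have h2 : ∑ k, Mᵀ i k * M k i = M i i * M i i := by
        refine Finset.sum_eq_single i (fun k _ hk => ?_)
          (fun h => absurd (Finset.mem_univ i) h)
        rw [Matrix.transpose_apply, hoff k i hk, zero_mul]
      rw [h2] at h1
      have : M i i = 1 := by nlinarith [hMd i]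
      simpa using this
    · rw [hoff i j hij]
      simp [Matrix.one_apply_ne hij]
  have : T₁ * T⁻¹ * T = 1 * T := by rw [← hMdef, hM1]
  rwa [Matrix.mul_assoc, Matrix.nonsing_inv_mul T (Matrix.isUnit_det_of_invertible T),
    Matrix.mul_one, Matrix.one_mul] at this

/-- Congruence preserves positive definiteness. -/
theorem posdef_conj {A B : Matrix (Fin m) (Fin m) ℝ} (hA : A.PosDef) [Invertible B] :
    (Bᵀ * A * B).PosDef := by
  have hAs : Aᵀ = A := by
    have := hA.isHermitian.eq
    rwa [Matrix.conjTranspose_eq_transpose_of_trivial] at this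
  refine Matrix.PosDef.of_dotProduct_mulVec_pos ?_ ?_
  · show (Bᵀ * A * B)ᴴ = Bᵀ * A * B
    rw [Matrix.conjTranspose_eq_transpose_of_trivial, Matrix.transpose_mul,
      Matrix.transpose_mul, Matrix.transpose_transpose, hAs, Matrix.mul_assoc]
  · intro x hx
    have hBx : B *ᵥ x ≠ 0 := by
      intro h
      apply hx
      have := Matrix.mulVec_injective_of_invertible B (a₁ := x) (a₂ := 0)
      simp only [Matrix.mulVec_zero] at this
      exact this h
    have key : star x ⬝ᵥ (Bᵀ * A * B) *ᵥ x = star (B *ᵥ x) ⬝ᵥ A *ᵥ (B *ᵥ x) := by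
      rw [star_trivial, star_trivial, ← Matrix.mulVec_mulVec, ← Matrix.mulVec_mulVec,
        Matrix.dotProduct_mulVec, Matrix.vecMul_transpose]
    rw [key]
    exact hA.dotProduct_mulVec_pos hBx

end CholAux

end CholAuxSec

/-- for `U` positive definite, `U + XᵀX` is positive definite, and with
`R = X * u(U + XᵀX)⁻¹` the matrix `I_m - RᵀR` is positive definite with Cholesky factor
`u(I_m - RᵀR) = u(U) * u(U + XᵀX)⁻¹` (upper triangular with positive diagonal), hence
`R * u(I_m - RᵀR)⁻¹ = X * u(U)⁻¹`. -/
theorem pearson_key_identity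
    {n m : ℕ} (X : Matrix (Fin n) (Fin m) ℝ) (U : Matrix (Fin m) (Fin m) ℝ)
    (hU : U.PosDef) :
    (U + Xᵀ * X).PosDef ∧
      (1 - (X * (cholU (U + Xᵀ * X))⁻¹)ᵀ * (X * (cholU (U + Xᵀ * X))⁻¹)).PosDef ∧
      (cholU U * (cholU (U + Xᵀ * X))⁻¹).BlockTriangular id ∧
      (∀ i : Fin m, 0 < (cholU U * (cholU (U + Xᵀ * X))⁻¹) i i) ∧
      cholU (1 - (X * (cholU (U + Xᵀ * X))⁻¹)ᵀ * (X * (cholU (U + Xᵀ * X))⁻¹)) =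
        cholU U * (cholU (U + Xᵀ * X))⁻¹ ∧
      (X * (cholU (U + Xᵀ * X))⁻¹) *
          (cholU (1 - (X * (cholU (U + Xᵀ * X))⁻¹)ᵀ * (X * (cholU (U + Xᵀ * X))⁻¹)))⁻¹ =
        X * (cholU U)⁻¹ := by
  classical
  have hXX : (Xᵀ * X).PosSemidef := by
    have := Matrix.posSemidef_conjTranspose_mul_self X
    rwa [Matrix.conjTranspose_eq_transpose_of_trivial] at this
  have hV : (U + Xᵀ * X).PosDef := hU.add_posSemidef hXX
  set B := cholU (U + Xᵀ * X) with hBdef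
  have hBt : B.BlockTriangular id := CholAux.cholU_upperTriangular hV
  have hBd : ∀ i, 0 < B i i := CholAux.cholU_diag_pos hV
  have hBspec : Bᵀ * B = U + Xᵀ * X := CholAux.cholU_spec hV
  haveI hBinv : Invertible B := B.invertibleOfIsUnitDet (CholAux.upper_invertible hBt hBd)
  haveI hBinv' : Invertible B⁻¹ := Matrix.invOf_eq_nonsing_inv B ▸ invertibleInvOf
  set C := cholU U with hCdef
  have hCt : C.BlockTriangular id := CholAux.cholU_upperTriangular hU
  have hCd : ∀ i, 0 < C i i := CholAux.cholU_diag_pos hU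
  have hCspec : Cᵀ * C = U := CholAux.cholU_spec hU
  haveI hCinv : Invertible C := C.invertibleOfIsUnitDet (CholAux.upper_invertible hCt hCd)
  set R := X * B⁻¹ with hRdef
  -- key algebraic identity
  have hkey : 1 - Rᵀ * R = (B⁻¹)ᵀ * U * B⁻¹ := by
    have h1 : (B⁻¹)ᵀ * (U + Xᵀ * X) * B⁻¹ = 1 := by
      rw [← hBspec, Matrix.mul_assoc, Matrix.mul_assoc,
        Matrix.mul_nonsing_inv B (Matrix.isUnit_det_of_invertible B), Matrix.mul_one,
        ← Matrix.transpose_mul,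
        Matrix.mul_nonsing_inv B (Matrix.isUnit_det_of_invertible B), Matrix.transpose_one]
    have h2 : Rᵀ * R = (B⁻¹)ᵀ * (Xᵀ * X) * B⁻¹ := by
      rw [hRdef, Matrix.transpose_mul]
      simp only [Matrix.mul_assoc]
    calc 1 - Rᵀ * R = (B⁻¹)ᵀ * (U + Xᵀ * X) * B⁻¹ - (B⁻¹)ᵀ * (Xᵀ * X) * B⁻¹ := by
          rw [h1, h2]
      _ = (B⁻¹)ᵀ * U * B⁻¹ := by
          rw [Matrix.mul_add, Matrix.add_mul]; abel
  have hPD : (1 - Rᵀ * R).PosDef := by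
    rw [hkey]
    exact CholAux.posdef_conj hU
  -- the Cholesky factor
  set W := C * B⁻¹ with hWdef
  have hWt : W.BlockTriangular id :=
    hCt.mul (Matrix.blockTriangular_inv_of_blockTriangular hBt)
  have hWd : ∀ i, 0 < W i i := by
    intro i
    rw [hWdef, CholAux.diag_mul_upper hCt (Matrix.blockTriangular_inv_of_blockTriangular hBt),
      CholAux.inv_diag hBt]
    exact mul_pos (hCd i) (inv_pos.mpr (hBd i))
  have hWW : Wᵀ * W = 1 - Rᵀ * R := by
    rw [hkey, hWdef, Matrix.transpose_mul, Matrix.mul_assoc, ← Matrix.mul_assoc Cᵀ, hCspec,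
      ← Matrix.mul_assoc]
  have hchol : cholU (1 - Rᵀ * R) = W := CholAux.cholU_unique hPD hWt hWd hWW
  refine ⟨hV, hPD, hWt, hWd, hchol, ?_⟩
  rw [hchol, hWdef, Matrix.mul_inv_rev, Matrix.nonsing_inv_nonsing_inv B
    (Matrix.isUnit_det_of_invertible B), hRdef, Matrix.mul_assoc, ← Matrix.mul_assoc B⁻¹,
    Matrix.nonsing_inv_mul B (Matrix.isUnit_det_of_invertible B), Matrix.one_mul]

end
end
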